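/- Let G be a path or cycle graph and I_s, I_t independent sets of G. Then every reconfiguration sequence from I_s to I_t (a sequence of independent sets in which each consecutive pair has connected induced symmetric difference) has length at least cc(I_s △ I_t), and there exists such a sequence of length exactly cc(I_s △ I_t). -/

import Mathlib

open SimpleGraph Finset
open scoped Fin.NatCast Fin.CommRing

/-- A set of vertices is independent: no two of its vertices are adjacent. -/
def IsIndep {V : Type*} (G : SimpleGraph V) (I : Set V) : Prop :=
  ∀ ⦃a⦄, a ∈ I → ∀ ⦃b⦄, b ∈ I → ¬ G.Adj a b

/-- The number of connected components of the subgraph induced by `S`. -/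
noncomputable def cc {V : Type*} (G : SimpleGraph V) (S : Set V) : ℕ :=
  Nat.card (G.induce S).ConnectedComponent

noncomputable def ccEquiv {V V' : Type*} {G : SimpleGraph V} {G' : SimpleGraph V'} (φ : G ≃g G') :
    G.ConnectedComponent ≃ G'.ConnectedComponent where
  toFun := .map φ.toHom
  invFun := .map φ.symm.toHom
  left_inv := fun C => C.ind (fun v => by simp)
  right_inv := fun C => C.ind (fun v => by simp)

lemma cc_empty {V : Type*} (G : SimpleGraph V) : cc G (∅ : Set V) = 0 := by
  unfold cc
  have : IsEmpty ((∅ : Set V) : Type _)  := by infer_instance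
  simp [Nat.card_of_isEmpty]

lemma cc_univ {V : Type*} (G : SimpleGraph V) (h : G.Connected) : cc G (Set.univ : Set V) = 1 := by
  unfold cc
  have h2 : (G.induce Set.univ).Connected := (G.induceUnivIso.connected_iff).2 h
  have : Subsingleton (G.induce Set.univ).ConnectedComponent :=
    h2.preconnected.subsingleton_connectedComponent
  have : Nonempty (G.induce Set.univ).ConnectedComponent :=
    Nonempty.map (SimpleGraph.connectedComponentMk _) h2.nonempty
  exact Nat.card_eq_one_iff_unique.2 ⟨‹_›, ‹_›⟩

lemma cc_le_one {V : Type*} [Subsingleton V] (G : SimpleGraph V) (S : Set V) : cc G S ≤ 1 := by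
  have hpre : Subsingleton (G.induce S).ConnectedComponent := by
    constructor
    intro a b
    refine ConnectedComponent.ind₂ (fun u v => ?_) a b
    have : u = v := Subtype.ext (Subsingleton.elim _ _)
    rw [this]
  rcases isEmpty_or_nonempty (G.induce S).ConnectedComponent with h | h
  · rw [cc]; simp [Nat.card_of_isEmpty]
  · rw [cc, Nat.card_eq_one_iff_unique.2 ⟨hpre, h⟩]

section Exist
variable {V : Type*} {G : SimpleGraph V} {X : Set V}

lemma indep_symmDiff_closed {I_s I_t U : Set V} (hs : IsIndep G I_s) (ht : IsIndep G I_t)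
    (hX : symmDiff I_s I_t = X)
    (hUX : U ⊆ X) (hcl : ∀ v ∈ U, ∀ w ∈ X, G.Adj v w → w ∈ U) :
    IsIndep G (symmDiff I_s U) := by
  intro a ha b hb hadj
  rw [Set.mem_symmDiff] at ha hb
  have hXs : ∀ {z : V}, z ∈ X → z ∉ I_s → z ∈ I_t := by
    intro z hz hzs
    rw [← hX, Set.mem_symmDiff] at hz; tauto
  rcases ha with ⟨has, hau⟩ | ⟨hau, has⟩
  · rcases hb with ⟨hbs, hbu⟩ | ⟨hbu, hbs⟩
    · exact hs has hbs hadj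
    · have hbt := hXs (hUX hbu) hbs
      by_cases hat : a ∈ I_t
      · exact ht hat hbt hadj
      · have haX : a ∈ X := by rw [← hX, Set.mem_symmDiff]; tauto
        exact hau (hcl b hbu a haX hadj.symm)
  · rcases hb with ⟨hbs, hbu⟩ | ⟨hbu, hbs⟩
    · have hat := hXs (hUX hau) has
      by_cases hbt : b ∈ I_t
      · exact ht hat hbt hadj
      · have hbX : b ∈ X := by rw [← hX, Set.mem_symmDiff]; tauto
        exact hbu (hcl a hau b hbX hadj)
    · exact ht (hXs (hUX hau) has) (hXs (hUX hbu) hbs) hadj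

lemma walk_reach_comp {c : (G.induce X).ConnectedComponent}
    {u v : ↥X} (p : (G.induce X).Walk u v)
    (hu : (G.induce X).connectedComponentMk u = c) :
    ∃ hv : (G.induce X).connectedComponentMk v = c,
      (G.induce {x | ∃ h : x ∈ X, (G.induce X).connectedComponentMk ⟨x, h⟩ = c}).Reachable
        ⟨u.1, u.2, hu⟩ ⟨v.1, v.2, hv⟩ := by
  induction p with
  | nil => exact ⟨hu, Reachable.refl _⟩
  | @cons a b w h p ih =>
    have hb : (G.induce X).connectedComponentMk b = c := by
      rw [← ConnectedComponent.connectedComponentMk_eq_of_adj h, hu]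
    obtain ⟨hv, hr⟩ := ih hb
    refine ⟨hv, Reachable.trans (Adj.reachable ?_) hr⟩
    simpa using h

lemma induce_component_connected (c : (G.induce X).ConnectedComponent) :
    (G.induce {x | ∃ h : x ∈ X, (G.induce X).connectedComponentMk ⟨x, h⟩ = c}).Connected := by
  obtain ⟨w, hw⟩ := c.exists_rep
  rw [SimpleGraph.connected_iff]
  refine ⟨?_, ⟨⟨w.1, w.2, hw⟩⟩⟩
  · rintro ⟨a, ha, hac⟩ ⟨b, hb, hbc⟩
    have : (G.induce X).Reachable ⟨a, ha⟩ ⟨b, hb⟩ :=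
      ConnectedComponent.exact (by rw [hac, hbc])
    obtain ⟨p⟩ := this
    obtain ⟨hv, hr⟩ := walk_reach_comp p hac
    exact hr

lemma exists_seq {V : Type*} [Fintype V] (G : SimpleGraph V) (I_s I_t : Set V)
    (hs : IsIndep G I_s) (ht : IsIndep G I_t) :
    ∃ seq : ℕ → Set V,
      seq 0 = I_s ∧ seq (cc G (symmDiff I_s I_t)) = I_t ∧
      (∀ i ≤ cc G (symmDiff I_s I_t), IsIndep G (seq i)) ∧
      (∀ i < cc G (symmDiff I_s I_t), (G.induce (symmDiff (seq i) (seq (i+1)))).Connected) := by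
  classical
  set X := symmDiff I_s I_t with hX
  haveI : Finite (G.induce X).ConnectedComponent :=
    Finite.of_surjective (SimpleGraph.connectedComponentMk _) (fun c => c.exists_rep)
  haveI : Fintype (G.induce X).ConnectedComponent := Fintype.ofFinite _
  set e := Fintype.equivFin (G.induce X).ConnectedComponent with he
  have hk : cc G X = Fintype.card (G.induce X).ConnectedComponent := Nat.card_eq_fintype_card
  set idx : ↥X → ℕ := fun w => (e ((G.induce X).connectedComponentMk w)).val with hidx
  set U : ℕ → Set V := fun j => {v | ∃ h : v ∈ X, idx ⟨v, h⟩ < j} with hU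
  refine ⟨fun j => symmDiff I_s (U j), ?_, ?_, ?_, ?_⟩
  · have : U 0 = ∅ := by ext v; simp [hU]
    simp [this, Set.bot_eq_empty ▸ (symmDiff_bot I_s)]
  · have : U (cc G X) = X := by
      ext v
      simp only [hU, Set.mem_setOf_eq]
      exact ⟨fun ⟨h, _⟩ => h, fun h => ⟨h, hk ▸ (e _).isLt⟩⟩
    show symmDiff I_s (U (cc G X)) = I_t
    rw [this, hX, symmDiff_symmDiff_cancel_left]
  · intro i _
    show IsIndep G (symmDiff I_s (U i))
    refine indep_symmDiff_closed hs ht rfl (fun v hv => hv.1) ?_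
    rintro v ⟨hv, hvi⟩ w hw hadj
    refine ⟨hw, ?_⟩
    have : (G.induce X).Adj ⟨v, hv⟩ ⟨w, hw⟩ := by simpa using hadj
    have hmk := ConnectedComponent.connectedComponentMk_eq_of_adj this
    simpa [hidx, ← hmk] using hvi
  · intro j hj
    have hstep : symmDiff (symmDiff I_s (U j)) (symmDiff I_s (U (j+1)))
        = symmDiff (U j) (U (j+1)) := by
      ext v; simp only [Set.mem_symmDiff]; tauto
    have hUU : symmDiff (U j) (U (j+1)) = {v | ∃ h : v ∈ X, idx ⟨v, h⟩ = j} := by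
      ext v
      simp only [Set.mem_symmDiff, hU, Set.mem_setOf_eq]
      constructor
      · rintro (⟨⟨h, h1⟩, h2⟩ | ⟨⟨h, h1⟩, h2⟩)
        · exact absurd ⟨h, by omega⟩ h2
        · refine ⟨h, ?_⟩
          by_contra hne
          exact h2 ⟨h, by omega⟩
      · rintro ⟨h, h1⟩
        exact Or.inr ⟨⟨h, by omega⟩, fun ⟨h', h2⟩ => by omega⟩
    show (G.induce (symmDiff (symmDiff I_s (U j)) (symmDiff I_s (U (j+1))))).Connected
    rw [hstep, hUU]
    have hjlt : j < Fintype.card (G.induce X).ConnectedComponent := hk ▸ hj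
    have : {v | ∃ h : v ∈ X, idx ⟨v, h⟩ = j}
        = {x | ∃ h : x ∈ X, (G.induce X).connectedComponentMk ⟨x, h⟩ = e.symm ⟨j, hjlt⟩} := by
      ext v
      simp only [Set.mem_setOf_eq, hidx]
      constructor
      · rintro ⟨h, h1⟩
        exact ⟨h, by rw [Equiv.eq_symm_apply]; exact Fin.ext h1⟩
      · rintro ⟨h, h1⟩
        exact ⟨h, by rw [Equiv.eq_symm_apply] at h1; exact congrArg Fin.val h1⟩
    rw [this]
    exact induce_component_connected _
end Exist

section Cyc
variable {n : ℕ}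

lemma mod_helper {x : ℕ} (hn : 0 < n) (h : x < 2*n) : x % n = if x < n then x else x - n := by
  split_ifs with h1
  · exact Nat.mod_eq_of_lt h1
  · rw [Nat.mod_eq_sub_mod (by omega), Nat.mod_eq_of_lt (by omega)]

lemma fin_sub_val (a b : Fin n) :
    (a - b).val = if b.val ≤ a.val then a.val - b.val else n - b.val + a.val := by
  have hb := b.isLt; have ha := a.isLt
  rw [Fin.sub_def]
  show (n - b.val + a.val) % n = _
  rw [mod_helper (by omega) (by omega)]
  split_ifs <;> omega

lemma fin_add_val (a b : Fin n) :
    (a + b).val = if a.val + b.val < n then a.val + b.val else a.val + b.val - n := by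
  have hb := b.isLt; have ha := a.isLt
  rw [Fin.add_def]
  show (a.val + b.val) % n = _
  rw [mod_helper (by omega) (by omega)]

lemma fin_one_val [NeZero n] (h2 : 2 ≤ n) : (1 : Fin n).val = 1 := by
  rw [Fin.val_one', Nat.mod_eq_of_lt (by omega)]

lemma fin_sub_eq_zero {a b : Fin n} (h : (a - b).val = 0) : a = b := by
  have := fin_sub_val a b
  have ha := a.isLt; have hb := b.isLt
  apply Fin.ext
  rw [this] at h; split_ifs at h <;> omega

lemma cyc_adj [NeZero n] (h2 : 2 ≤ n) {u v : Fin n} :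
    (cycleGraph n).Adj u v ↔ u = v + 1 ∨ v = u + 1 := by
  rw [SimpleGraph.cycleGraph_adj']
  have key : ∀ x y : Fin n, (x - y).val = 1 ↔ x = y + 1 := by
    intro x y
    constructor
    · intro h
      have : x - y = 1 := Fin.ext (by rw [h, fin_one_val h2])
      rw [← this]; ring
    · intro h
      rw [h]
      have : y + 1 - y = 1 := by ring
      rw [this, fin_one_val h2]
  rw [key, key]

lemma psi_adj [NeZero n] (h2 : 2 ≤ n) {u v w : Fin n} (h : (cycleGraph n).Adj u v)
    (hu : u ≠ w) (hv : v ≠ w) :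
    (u - w).val = (v - w).val + 1 ∨ (v - w).val = (u - w).val + 1 := by
  rw [cyc_adj h2] at h
  have key : ∀ x y : Fin n, x ≠ w → y ≠ w → x = y + 1 → (x - w).val = (y - w).val + 1 := by
    intro x y hx hy hxy
    have hxw : x - w = (y - w) + 1 := by rw [hxy]; ring
    have h1 : (y - w).val ≠ n - 1 := by
      intro hc
      have : y - w + 1 = 0 := by
        apply Fin.ext
        rw [fin_add_val, fin_one_val h2, hc]
        have : 0 < n := by omega
        simp [Nat.sub_add_cancel (by omega : 1 ≤ n)]
      rw [← hxw] at this
      exact hx (fin_sub_eq_zero (by rw [this]; rfl))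
    have h2' : (y - w).val < n := (y - w).isLt
    rw [hxw, fin_add_val, fin_one_val h2]
    have : (y-w).val + 1 < n := by omega
    simp [this]
  rcases h with h | h
  · exact Or.inl (key u v hu hv h)
  · exact Or.inr (key v u hv hu h)

lemma sub_one_psi [NeZero n] (h2 : 2 ≤ n) (t : Fin n) :
    (t - 1).val = if t.val = 0 then n - 1 else t.val - 1 := by
  rw [fin_sub_val, fin_one_val h2]
  have := t.isLt
  split_ifs <;> omega

lemma cyc_ivt [NeZero n] (h2 : 2 ≤ n) {S : Set (Fin n)} {w : Fin n} (hw : w ∉ S)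
    {x y : ↥S} (p : ((cycleGraph n).induce S).Walk x y) :
    ∀ k : ℕ, ((x.1 - w).val ≤ k ∧ k ≤ (y.1 - w).val) ∨
        ((y.1 - w).val ≤ k ∧ k ≤ (x.1 - w).val) →
      ∃ z : Fin n, z ∈ S ∧ (z - w).val = k := by
  induction p with
  | nil =>
    rename_i u
    intro k hk; exact ⟨u.1, u.2, by omega⟩
  | @cons a b c hab q ih =>
    intro k hk
    have hadj : (cycleGraph n).Adj a.1 b.1 := by simpa using hab
    have ha : a.1 ≠ w := fun h => hw (h ▸ a.2)
    have hb : b.1 ≠ w := fun h => hw (h ▸ b.2)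
    have hstep := psi_adj h2 hadj ha hb
    by_cases hcase : ((b.1 - w).val ≤ k ∧ k ≤ (c.1 - w).val) ∨
        ((c.1 - w).val ≤ k ∧ k ≤ (b.1 - w).val)
    · exact ih k hcase
    · exact ⟨a.1, a.2, by omega⟩

open Classical in
noncomputable def LF [NeZero n] (S : Set (Fin n)) : Finset (Fin n) :=
  Finset.univ.filter (fun v => v ∈ S ∧ v - 1 ∉ S)

lemma mem_LF [NeZero n] {S : Set (Fin n)} {v : Fin n} : v ∈ LF S ↔ v ∈ S ∧ v - 1 ∉ S := by
  simp [LF]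

lemma cc_eq_LF [NeZero n] (h2 : 2 ≤ n) (S : Set (Fin n)) (hS : S ≠ Set.univ) :
    cc (cycleGraph n) S = (LF S).card := by
  obtain ⟨w, hw⟩ := (Set.ne_univ_iff_exists_notMem S).1 hS
  set H := (cycleGraph n).induce S with hH
  set g : ↥(LF S) → H.ConnectedComponent :=
    fun v => H.connectedComponentMk ⟨v.1, (mem_LF.1 v.2).1⟩ with hg
  have hsurj : Function.Surjective g := by
    have claim : ∀ k : ℕ, ∀ x : ↥S, (x.1 - w).val ≤ k →
        ∃ v : ↥(LF S), g v = H.connectedComponentMk x := by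
      intro k
      induction k with
      | zero =>
        intro x hx
        have hx0 : (x.1 - w).val = 0 := by omega
        have hxw : x.1 = w := fin_sub_eq_zero hx0
        exact absurd (hxw ▸ x.2) hw
      | succ k ih =>
        intro x hx
        by_cases hv1 : x.1 - 1 ∈ S
        · have hxw : x.1 ≠ w := fun h => hw (h ▸ x.2)
          have hx1w : x.1 - 1 ≠ w := fun h => hw (h ▸ hv1)
          have hpsi0 : (x.1 - w).val ≠ 0 := fun h => hxw (fin_sub_eq_zero h)
          have hpsi : (x.1 - 1 - w).val = (x.1 - w).val - 1 := by
            have h1 : x.1 - 1 - w = (x.1 - w) - 1 := by ring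
            rw [h1, sub_one_psi h2]
            simp [hpsi0]
          have hpsi1 : (x.1 - w).val ≠ 1 := by
            intro h
            exact hx1w (fin_sub_eq_zero (by omega))
          have hadj : H.Adj ⟨x.1 - 1, hv1⟩ x := by
            show (cycleGraph n).Adj (x.1 - 1) x.1
            rw [cyc_adj h2]
            exact Or.inr (sub_add_cancel _ _).symm
          have hle : ((x.1 - 1) - w).val ≤ k := by omega
          obtain ⟨v, hv⟩ := ih ⟨x.1 - 1, hv1⟩ hle
          exact ⟨v, by rw [hv, ConnectedComponent.connectedComponentMk_eq_of_adj hadj]⟩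
        · exact ⟨⟨x.1, mem_LF.2 ⟨x.2, hv1⟩⟩, by simp [hg]⟩
    intro c
    obtain ⟨x, hx⟩ := c.exists_rep
    obtain ⟨v, hv⟩ := claim (x.1 - w).val x le_rfl
    exact ⟨v, by rw [hv]; exact hx⟩
  have hinj : Function.Injective g := by
    rintro v1 v2 hgv
    have h1 := mem_LF.1 v1.2
    have h2' := mem_LF.1 v2.2
    set w' := v1.1 - 1 with hw'
    have hw'S : w' ∉ S := h1.2
    have hpsi1 : (v1.1 - w').val = 1 := by
      have : v1.1 - w' = 1 := by rw [hw']; ring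
      rw [this, fin_one_val h2]
    have hne : v2.1 ≠ w' := fun h => hw'S (by rw [← h]; exact h2'.1)
    have hd0 : (v2.1 - w').val ≠ 0 := fun h => hne (fin_sub_eq_zero h)
    by_cases hd1 : (v2.1 - w').val = 1
    · apply Subtype.ext
      have : v2.1 - w' = v1.1 - w' := Fin.ext (by rw [hpsi1, hd1])
      exact (sub_left_inj.1 this).symm ▸ rfl
    · exfalso
      have hreach : H.Reachable ⟨v1.1, h1.1⟩ ⟨v2.1, h2'.1⟩ :=
        ConnectedComponent.exact hgv
      obtain ⟨p⟩ := hreach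
      obtain ⟨z, hzS, hzval⟩ := cyc_ivt h2 hw'S p ((v2.1 - w').val - 1)
        (Or.inl ⟨by show (v1.1 - w').val ≤ _; omega, by show _ ≤ (v2.1 - w').val; omega⟩)
      have : z = v2.1 - 1 := by
        have hv2 : (v2.1 - 1 - w').val = (v2.1 - w').val - 1 := by
          have e : v2.1 - 1 - w' = (v2.1 - w') - 1 := by ring
          rw [e, sub_one_psi h2]
          simp [hd0]
        have : z - w' = v2.1 - 1 - w' := Fin.ext (by rw [hzval, hv2])
        exact sub_left_inj.1 this
      exact h2'.2 (this ▸ hzS)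
  calc cc (cycleGraph n) S = Nat.card H.ConnectedComponent := rfl
    _ = Nat.card ↥(LF S) := (Nat.card_eq_of_bijective g ⟨hinj, hsurj⟩).symm
    _ = (LF S).card := Nat.card_eq_finsetCard _

noncomputable def Fv [NeZero n] (a : Fin n) (i : ℕ) : Fin n := a + (i : Fin n)

open Classical in
lemma card_LF_sum [NeZero n] (T : Set (Fin n)) (a : Fin n) :
    ((LF T).card : ℤ) = ∑ i ∈ Finset.range n,
      (if Fv a i ∈ T ∧ Fv a i - 1 ∉ T then (1:ℤ) else 0) := by
  have h1 : ((LF T).card : ℤ) = ∑ v : Fin n, (if v ∈ T ∧ v - 1 ∉ T then (1:ℤ) else 0) := by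
    rw [LF, Finset.card_filter]
    push_cast
    apply Finset.sum_congr rfl; intros; split_ifs <;> simp
  rw [h1, ← Equiv.sum_comp (Equiv.addLeft a) (fun v => if v ∈ T ∧ v - 1 ∉ T then (1:ℤ) else 0),
    ← Fin.sum_univ_eq_sum_range
      (fun i => if Fv a i ∈ T ∧ Fv a i - 1 ∉ T then (1:ℤ) else 0) n]
  apply Finset.sum_congr rfl
  intro v _
  simp [Fv, Fin.cast_val_eq_self]; congr

open Classical in
lemma LF_compl [NeZero n] (S : Set (Fin n)) : (LF Sᶜ).card = (LF S).card := by
  have key : ∑ v : Fin n, ((if v ∈ S then (1:ℤ) else 0) - (if v - 1 ∈ S then (1:ℤ) else 0)) = 0 := by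
    rw [Finset.sum_sub_distrib]
    have := Equiv.sum_comp (Equiv.subRight (1 : Fin n)) (fun v => if v ∈ S then (1:ℤ) else 0)
    simp only [Equiv.subRight_apply] at this
    rw [this, sub_self]
  have cardS : ∀ T : Set (Fin n), ((LF T).card : ℤ) = ∑ v : Fin n, (if v ∈ T ∧ v - 1 ∉ T then (1:ℤ) else 0) := by
    intro T
    rw [LF, Finset.card_filter]
    push_cast
    apply Finset.sum_congr rfl; intros; split_ifs <;> simp
  have : ((LF Sᶜ).card : ℤ) = (LF S).card := by
    rw [cardS, cardS, ← sub_eq_zero, ← Finset.sum_sub_distrib]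
    have hpt : (∑ v : Fin n, ((if v - 1 ∈ S then (1:ℤ) else 0) - if v ∈ S then (1:ℤ) else 0)) = 0 := by
      rw [Finset.sum_sub_distrib] at key ⊢
      linarith [key]
    refine Eq.trans (Finset.sum_congr rfl fun v _ => ?_) hpt
    by_cases h1 : v ∈ S <;> by_cases h2 : v - 1 ∈ S <;> simp [h1, h2]
  exact_mod_cast this

open Classical in
lemma LF_arc [NeZero n] (h2 : 2 ≤ n) (X : Set (Fin n)) (a : Fin n) (m : ℕ) (hm : m + 2 ≤ n) :
    (LF (symmDiff X {v | (v - a).val ≤ m})).card ≤ (LF X).card + 1 := by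
  set D : Set (Fin n) := {v | (v - a).val ≤ m} with hD
  set Y := symmDiff X D with hY
  have hFval : ∀ i, i < n → (Fv a i - a).val = i := by
    intro i hi
    rw [Fv, add_sub_cancel_left]
    exact Fin.val_cast_of_lt hi
  have hFD : ∀ i, i < n → (Fv a i ∈ D ↔ i ≤ m) := by
    intro i hi
    rw [hD]; simp only [Set.mem_setOf_eq, hFval i hi]
  have hFsub : ∀ i, 1 ≤ i → i < n → Fv a i - 1 = Fv a (i-1) := by
    intro i h1 hi
    have hcast : ((i : Fin n)) - 1 = ((i-1 : ℕ) : Fin n) := by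
      apply Fin.ext
      rw [sub_one_psi h2, Fin.val_cast_of_lt hi, Fin.val_cast_of_lt (by omega)]
      rw [if_neg (by omega)]
    rw [Fv, Fv, add_sub_assoc, hcast]
  have hF0 : Fv a 0 = a := by rw [Fv]; simp
  have hF01 : Fv a 0 - 1 = a - 1 := by rw [hF0]
  set r : Set (Fin n) → ℕ → ℤ :=
    fun T i => if Fv a i ∈ T ∧ Fv a i - 1 ∉ T then 1 else 0 with hr
  set fl : ℕ → ℤ := fun i => if Fv a i - 1 ∈ X ∧ Fv a i ∉ X then 1 else 0 with hfl
  set hx : ℕ → ℤ := fun i => if Fv a i ∈ X then 1 else 0 with hhx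
  have split : ∀ g : ℕ → ℤ, ∑ i ∈ range n, g i
      = g 0 + (∑ i ∈ range m, g (i+1)) + g (m+1) + ∑ i ∈ Ico (m+2) n, g i := by
    intro g
    rw [Finset.range_eq_Ico, ← Finset.sum_Ico_consecutive g (Nat.zero_le (m+2)) hm,
      ← Finset.range_eq_Ico, Finset.sum_range_succ, Finset.sum_range_succ']
    ring
  have hmid : ∀ i ∈ range m, r Y (i+1) = fl (i+1) := by
    intro i hi
    rw [Finset.mem_range] at hi
    have hin : i + 1 < n := by omega
    have hDmem : Fv a (i+1) ∈ D := (hFD _ hin).2 (by omega)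
    have hsub : Fv a (i+1) - 1 = Fv a i := by rw [hFsub (i+1) (by omega) hin]; norm_num
    have hDmem2 : Fv a i ∈ D := (hFD i (by omega)).2 (by omega)
    have e1 : Fv a (i+1) ∈ Y ↔ Fv a (i+1) ∉ X := by
      rw [hY]; simp [Set.mem_symmDiff, hDmem]
    have e2 : Fv a i ∈ Y ↔ Fv a i ∉ X := by
      rw [hY]; simp [Set.mem_symmDiff, hDmem2]
    simp only [hr, hfl]
    refine if_congr ?_ rfl rfl
    rw [hsub]
    tauto
  have htail : ∀ i ∈ Ico (m+2) n, r Y i = r X i := by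
    intro i hi
    rw [Finset.mem_Ico] at hi
    have hnD : Fv a i ∉ D := fun h => by have := (hFD i hi.2).1 h; omega
    have hsub : Fv a i - 1 = Fv a (i-1) := hFsub i (by omega) hi.2
    have hnD2 : Fv a (i-1) ∉ D := fun h => by
      have := (hFD (i-1) (by omega)).1 h; omega
    have e1 : Fv a i ∈ Y ↔ Fv a i ∈ X := by
      rw [hY]; simp [Set.mem_symmDiff, hnD]
    have e2 : Fv a (i-1) ∈ Y ↔ Fv a (i-1) ∈ X := by
      rw [hY]; simp [Set.mem_symmDiff, hnD2]
    simp only [hr]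
    refine if_congr ?_ rfl rfl
    rw [hsub]
    tauto
  have hDa : a ∈ D := by
    have := (hFD 0 (by omega)).2 (by omega)
    rwa [hF0] at this
  have hDa1 : a - 1 ∉ D := by
    intro h
    rw [hD, Set.mem_setOf_eq] at h
    have he : a - 1 - a = (0:Fin n) - 1 := by ring
    rw [he, sub_one_psi h2] at h
    simp at h
    omega
  have hiii : r Y 0 = if a ∉ X ∧ a - 1 ∉ X then 1 else 0 := by
    have e1 : Fv a 0 ∈ Y ↔ a ∉ X := by
      rw [hY, hF0]; simp [Set.mem_symmDiff, hDa]
    have e2 : Fv a 0 - 1 ∈ Y ↔ a - 1 ∈ X := by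
      rw [hY, hF01]; simp [Set.mem_symmDiff, hDa1]
    simp only [hr]
    exact if_congr (by tauto) rfl rfl
  have hm1n : m + 1 < n := by omega
  have hsubm1 : Fv a (m+1) - 1 = Fv a m := by rw [hFsub (m+1) (by omega) hm1n]; norm_num
  have hnDm1 : Fv a (m+1) ∉ D := fun h => by have := (hFD (m+1) hm1n).1 h; omega
  have hDm : Fv a m ∈ D := (hFD m (by omega)).2 (by omega)
  have hiv : r Y (m+1) = if Fv a (m+1) ∈ X ∧ Fv a m ∈ X then 1 else 0 := by
    have e1 : Fv a (m+1) ∈ Y ↔ Fv a (m+1) ∈ X := by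
      rw [hY]; simp [Set.mem_symmDiff, hnDm1]
    have e2 : Fv a m ∈ Y ↔ Fv a m ∉ X := by
      rw [hY]; simp [Set.mem_symmDiff, hDm]
    simp only [hr]
    refine if_congr ?_ rfl rfl
    rw [hsubm1]
    tauto
  have hrX0 : r X 0 = if a ∈ X ∧ a - 1 ∉ X then 1 else 0 := by
    simp only [hr, hF0, hF01]
  have hrXm1 : r X (m+1) = if Fv a (m+1) ∈ X ∧ Fv a m ∉ X then 1 else 0 := by
    simp only [hr, hsubm1]
  have htel : ∑ i ∈ range m, (r X (i+1) - fl (i+1)) = hx m - hx 0 := by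
    have hpt : ∀ i ∈ range m, r X (i+1) - fl (i+1) = hx (i+1) - hx i := by
      intro i hi
      rw [Finset.mem_range] at hi
      have hsub : Fv a (i+1) - 1 = Fv a i := by
        rw [hFsub (i+1) (by omega) (by omega)]; norm_num
      by_cases hA : Fv a (i+1) ∈ X <;> by_cases hB : Fv a i ∈ X <;>
        simp [hr, hfl, hhx, hsub, hA, hB]
    rw [Finset.sum_congr rfl hpt, Finset.sum_range_sub (fun i => hx i) m]
  have cardY := card_LF_sum (n := n) Y a
  have cardX := card_LF_sum (n := n) X a
  have hYsum : ((LF Y).card : ℤ)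
      = r Y 0 + (∑ i ∈ range m, fl (i+1)) + r Y (m+1) + ∑ i ∈ Ico (m+2) n, r X i := by
    rw [cardY]
    have : ∑ i ∈ range n, (if Fv a i ∈ Y ∧ Fv a i - 1 ∉ Y then (1:ℤ) else 0)
        = ∑ i ∈ range n, r Y i := by
      apply Finset.sum_congr rfl; intro i _; simp only [hr]
    rw [this, split (r Y), Finset.sum_congr rfl hmid, Finset.sum_congr rfl htail]
  have hXsum : ((LF X).card : ℤ)
      = r X 0 + (∑ i ∈ range m, r X (i+1)) + r X (m+1) + ∑ i ∈ Ico (m+2) n, r X i := by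
    rw [cardX]
    have : ∑ i ∈ range n, (if Fv a i ∈ X ∧ Fv a i - 1 ∉ X then (1:ℤ) else 0)
        = ∑ i ∈ range n, r X i := by
      apply Finset.sum_congr rfl; intro i _; simp only [hr]
    rw [this, split (r X)]
  have htel2 : ∑ i ∈ range m, fl (i+1)
      = (∑ i ∈ range m, r X (i+1)) - (hx m - hx 0) := by
    rw [← htel, Finset.sum_sub_distrib]
    ring
  have hfinal : r Y 0 + r Y (m+1) + hx 0 ≤ r X 0 + r X (m+1) + hx m + 1 := by
    rw [hiii, hiv, hrX0, hrXm1]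
    simp only [hhx, hF0]
    by_cases hp : a - 1 ∈ X <;> by_cases hq : a ∈ X <;>
      by_cases hs : Fv a m ∈ X <;> by_cases ht : Fv a (m+1) ∈ X <;>
      simp [hp, hq, hs, ht]
  have : ((LF Y).card : ℤ) ≤ ((LF X).card : ℤ) + 1 := by
    rw [hYsum, hXsum, htel2]
    linarith
  exact_mod_cast this

lemma arc_of_connected [NeZero n] (h2 : 2 ≤ n) (D : Set (Fin n))
    (hD : ((cycleGraph n).induce D).Connected) (hDu : D ≠ Set.univ) :
    ∃ a m, m + 2 ≤ n ∧ D = {v | (v - a).val ≤ m} := by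
  classical
  obtain ⟨w, hw⟩ := (Set.ne_univ_iff_exists_notMem D).1 hDu
  obtain ⟨x0⟩ := hD.nonempty
  set T : Finset ℕ := (Set.toFinite D).toFinset.image (fun v => (v - w).val) with hT
  have hmemT : ∀ k, k ∈ T ↔ ∃ v ∈ D, (v - w).val = k := by
    intro k
    simp [hT, Set.Finite.mem_toFinset]
  have hTne : T.Nonempty := ⟨(x0.1 - w).val, (hmemT _).2 ⟨x0.1, x0.2, rfl⟩⟩
  set lo := T.min' hTne with hlo
  set hi := T.max' hTne with hhi
  obtain ⟨dlo, hdloD, hdlo⟩ := (hmemT lo).1 (T.min'_mem hTne)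
  obtain ⟨dhi, hdhiD, hdhi⟩ := (hmemT hi).1 (T.max'_mem hTne)
  have hpsi_pos : ∀ v ∈ D, 1 ≤ (v - w).val := by
    intro v hv
    rcases Nat.eq_zero_or_pos ((v - w).val) with h | h
    · exact absurd (fin_sub_eq_zero h ▸ hv) hw
    · omega
  have hlo1 : 1 ≤ lo := hdlo ▸ hpsi_pos dlo hdloD
  have hilt : hi < n := hdhi ▸ (dhi - w).isLt
  have hlohi : lo ≤ hi := T.min'_le _ (T.max'_mem hTne)
  refine ⟨dlo, hi - lo, by omega, ?_⟩
  ext v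
  simp only [Set.mem_setOf_eq]
  constructor
  · intro hv
    have h1 : lo ≤ (v - w).val := T.min'_le _ ((hmemT _).2 ⟨v, hv, rfl⟩)
    have h2' : (v - w).val ≤ hi := T.le_max' _ ((hmemT _).2 ⟨v, hv, rfl⟩)
    have he : v - dlo = (v - w) - (dlo - w) := by ring
    rw [he, fin_sub_val, hdlo, if_pos h1]
    omega
  · intro hv
    have he : v - w = (v - dlo) + (dlo - w) := by ring
    have hvlt := (v - dlo).isLt
    have hval : (v - w).val = (v - dlo).val + lo := by
      rw [he, fin_add_val, hdlo, if_pos (by omega)]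
    have hreach : ((cycleGraph n).induce D).Reachable ⟨dlo, hdloD⟩ ⟨dhi, hdhiD⟩ :=
      hD.preconnected _ _
    obtain ⟨p⟩ := hreach
    obtain ⟨z, hzD, hzval⟩ := cyc_ivt h2 hw p ((v - w).val)
      (Or.inl ⟨by show (dlo - w).val ≤ _; omega, by show _ ≤ (dhi - w).val; omega⟩)
    have : z = v := by
      have : z - w = v - w := Fin.ext (by rw [hzval])
      exact sub_left_inj.1 this
    exact this ▸ hzD

lemma LF_le_cc [NeZero n] (h2 : 2 ≤ n) (S : Set (Fin n)) :
    (LF S).card ≤ cc (cycleGraph n) S := by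
  by_cases hS : S = Set.univ
  · subst hS
    have : LF (Set.univ : Set (Fin n)) = ∅ := by
      ext v; simp [mem_LF]
    simp [this]
  · rw [cc_eq_LF h2 S hS]

lemma key_cycle [NeZero n] (h2 : 2 ≤ n) (X D : Set (Fin n))
    (hD : ((cycleGraph n).induce D).Connected) :
    cc (cycleGraph n) X ≤ cc (cycleGraph n) (symmDiff X D) + 1 := by
  by_cases hXu : X = Set.univ
  · have hconn : (cycleGraph n).Connected := by
      obtain ⟨m, rfl⟩ : ∃ m, n = m + 1 := ⟨n - 1, by omega⟩
      exact cycleGraph_connected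
    rw [hXu, cc_univ _ hconn]
    omega
  · rw [cc_eq_LF h2 X hXu]
    by_cases hDu : D = Set.univ
    · subst hDu
      have hXc : symmDiff X Set.univ = Xᶜ := by
        ext v; simp [Set.mem_symmDiff]
      rw [hXc]
      calc (LF X).card = (LF Xᶜ).card := (LF_compl X).symm
        _ ≤ cc (cycleGraph n) Xᶜ := LF_le_cc h2 _
        _ ≤ cc (cycleGraph n) Xᶜ + 1 := by omega
    · obtain ⟨a, m, hm, hDeq⟩ := arc_of_connected h2 D hD hDu
      have harc := LF_arc h2 (symmDiff X D) a m hm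
      rw [← hDeq, symmDiff_symmDiff_cancel_right] at harc
      calc (LF X).card ≤ (LF (symmDiff X D)).card + 1 := harc
        _ ≤ cc (cycleGraph n) (symmDiff X D) + 1 := by
            have := LF_le_cc h2 (symmDiff X D); omega

lemma path_adj_iff {u v : Fin n} :
    (pathGraph n).Adj u v ↔ (cycleGraph (n+1)).Adj u.castSucc v.castSucc := by
  rw [SimpleGraph.pathGraph_adj, SimpleGraph.cycleGraph_adj']
  have h1 := fin_sub_val (u.castSucc) (v.castSucc)
  have h2 := fin_sub_val (v.castSucc) (u.castSucc)
  simp only [Fin.coe_castSucc] at h1 h2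
  rw [h1, h2]
  have hu := u.isLt; have hv := v.isLt
  split_ifs <;> omega

noncomputable def upIso (S : Set (Fin n)) :
    (pathGraph n).induce S ≃g (cycleGraph (n+1)).induce (Fin.castSucc '' S) where
  toEquiv := Equiv.Set.image Fin.castSucc S (Fin.castSucc_injective n)
  map_rel_iff' := @fun a b => by
    show (cycleGraph (n+1)).Adj _ _ ↔ (pathGraph n).Adj a.1 b.1
    exact path_adj_iff.symm

lemma cc_up (S : Set (Fin n)) :
    cc (pathGraph n) S = cc (cycleGraph (n+1)) (Fin.castSucc '' S) :=
  Nat.card_congr (ccEquiv (upIso S))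

lemma key_path (hn : 1 ≤ n) (X D : Set (Fin n)) (hD : ((pathGraph n).induce D).Connected) :
    cc (pathGraph n) X ≤ cc (pathGraph n) (symmDiff X D) + 1 := by
  have h2 : 2 ≤ n + 1 := by omega
  have hDC : ((cycleGraph (n+1)).induce (Fin.castSucc '' D)).Connected :=
    ((upIso D).connected_iff).1 hD
  have := key_cycle h2 (Fin.castSucc '' X) (Fin.castSucc '' D) hDC
  rw [← Set.image_symmDiff (Fin.castSucc_injective n) X D] at this
  rw [cc_up X, cc_up (symmDiff X D)]
  exact this

lemma key_all (G : SimpleGraph (Fin n)) (hG : G = pathGraph n ∨ G = cycleGraph n)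
    (X D : Set (Fin n)) (hD : (G.induce D).Connected) :
    cc G X ≤ cc G (symmDiff X D) + 1 := by
  by_cases hn : n ≤ 1
  · haveI : Subsingleton (Fin n) := by
      rcases (by omega : n = 0 ∨ n = 1) with rfl | rfl
      · exact ⟨fun a => a.elim0⟩
      · infer_instance
    have := cc_le_one G X
    omega
  · haveI : NeZero n := ⟨by omega⟩
    rcases hG with rfl | rfl
    · exact key_path (by omega) X D hD
    · exact key_cycle (by omega) X D hD
end Cyc

lemma symm3 {α : Type*} (A B C : Set α) :
    symmDiff (symmDiff A C) (symmDiff A B) = symmDiff B C := by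
  ext v; simp only [Set.mem_symmDiff]; tauto

lemma lower_bound {n : ℕ} (G : SimpleGraph (Fin n))
    (key : ∀ X D : Set (Fin n), (G.induce D).Connected → cc G X ≤ cc G (symmDiff X D) + 1)
    (I_s I_t : Set (Fin n)) (ℓ : ℕ) (seq : ℕ → Set (Fin n))
    (h0 : seq 0 = I_s) (hl : seq ℓ = I_t)
    (hconn : ∀ i < ℓ, (G.induce (symmDiff (seq i) (seq (i+1)))).Connected) :
    cc G (symmDiff I_s I_t) ≤ ℓ := by
  have main : ∀ j, j ≤ ℓ → cc G (symmDiff (seq (ℓ - j)) I_t) ≤ j := by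
    intro j
    induction j with
    | zero =>
      intro _
      rw [Nat.sub_zero, hl, symmDiff_self, Set.bot_eq_empty, cc_empty]
    | succ j ih =>
      intro hj
      have hi : ℓ - (j+1) < ℓ := by omega
      have hstep := key (symmDiff (seq (ℓ - (j+1))) I_t)
        (symmDiff (seq (ℓ - (j+1))) (seq (ℓ - (j+1) + 1))) (hconn _ hi)
      have he := symm3 (seq (ℓ - (j+1))) (seq (ℓ - (j+1) + 1)) I_t
      have hsucc : ℓ - (j+1) + 1 = ℓ - j := by omega
      rw [he, hsucc] at hstep
      have := ih (by omega)
      omega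
  have := main ℓ le_rfl
  rw [Nat.sub_self, h0] at this
  exact this

/-- On a path or a cycle, every reconfiguration sequence from `I_s` to `I_t` has length at
least `cc(I_s ∆ I_t)`, and there is one of exactly this length. -/
theorem stmt_9 {n : ℕ} (G : SimpleGraph (Fin n))
    (hG : G = SimpleGraph.pathGraph n ∨ G = SimpleGraph.cycleGraph n)
    (I_s I_t : Set (Fin n)) (hs : IsIndep G I_s) (ht : IsIndep G I_t) :
    (∀ (ℓ : ℕ) (seq : ℕ → Set (Fin n)),
        seq 0 = I_s → seq ℓ = I_t →
        (∀ i ≤ ℓ, IsIndep G (seq i)) →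
        (∀ i < ℓ, (G.induce (symmDiff (seq i) (seq (i + 1)))).Connected) →
        cc G (symmDiff I_s I_t) ≤ ℓ) ∧
    (∃ seq : ℕ → Set (Fin n),
        seq 0 = I_s ∧ seq (cc G (symmDiff I_s I_t)) = I_t ∧
        (∀ i ≤ cc G (symmDiff I_s I_t), IsIndep G (seq i)) ∧
        (∀ i < cc G (symmDiff I_s I_t),
          (G.induce (symmDiff (seq i) (seq (i + 1)))).Connected)) := by
  constructor
  · intro ℓ seq h0 hl _ hconn
    exact lower_bound G (key_all G hG) I_s I_t ℓ seq h0 hl hconn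
  · exact exists_seq G I_s I_t hs ht
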